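/- The supremum over all probability measures μ on ℕ (equivalently, on ℝ₊) of P_{μ⊗3}(2X₃ < X₁ + X₂) equals 2/3, where X₁, X₂, X₃ are iid with law μ. -/

import Mathlib

open MeasureTheory
open Finset ENNReal NNReal

lemma upper (μ : Measure ℝ) [IsProbabilityMeasure μ] :
    (Measure.pi fun _ : Fin 3 => μ) {x | 2 * x 2 < x 0 + x 1} ≤ 2/3 := by
  set P := Measure.pi fun _ : Fin 3 => μ with hP
  have hm : ∀ i j k : Fin 3, MeasurableSet {x : Fin 3 → ℝ | 2 * x i < x j + x k} := by
    intro i j k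
    exact measurableSet_lt (by fun_prop) (by fun_prop)
  have key : ∀ e : Fin 3 ≃ Fin 3,
      P {x | 2 * x (e 2) < x (e 0) + x (e 1)} = P {x | 2 * x 2 < x 0 + x 1} := by
    intro e
    have h := measurePreserving_arrowCongr' (fun _ : Fin 3 => μ) (fun _ : Fin 3 => μ)
      e.symm (MeasurableEquiv.refl ℝ) (fun i => MeasurePreserving.id μ)
    have h2 := h.measure_preimage (μa := P) (μb := P) (hm 2 0 1).nullMeasurableSet
    rw [← h2]
    congr 1
  have hA := key (Equiv.swap 1 2)
  have hB := key (finRotate 3)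
  simp only [show (Equiv.swap (1:Fin 3) 2) 2 = 1 by decide,
    show (Equiv.swap (1:Fin 3) 2) 0 = 0 by decide,
    show (Equiv.swap (1:Fin 3) 2) 1 = 2 by decide,
    show (finRotate 3) (2:Fin 3) = 0 by decide,
    show (finRotate 3) (0:Fin 3) = 1 by decide,
    show (finRotate 3) (1:Fin 3) = 2 by decide] at hA hB
  -- hA : P {x | 2 * x 1 < x 0 + x 2} = P A ; hB : P {x | 2 * x 0 < x 1 + x 2} = P A
  set A := {x : Fin 3 → ℝ | 2 * x 2 < x 0 + x 1}
  set B := {x : Fin 3 → ℝ | 2 * x 1 < x 0 + x 2}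
  set C := {x : Fin 3 → ℝ | 2 * x 0 < x 1 + x 2}
  haveI : IsProbabilityMeasure P := by rw [hP]; infer_instance
  have h1 : P A + P B = P (A ∪ B) + P (A ∩ B) := (measure_union_add_inter A (hm 1 0 2)).symm
  have h2 : A ∩ B ⊆ Cᶜ := by
    rintro x ⟨hxA, hxB⟩
    simp only [Set.mem_compl_iff, Set.mem_setOf_eq, not_lt, A, B, C] at *
    linarith
  have h3 : P (A ∩ B) + P C ≤ 1 := by
    calc P (A ∩ B) + P C ≤ P Cᶜ + P C := by
          exact add_le_add (measure_mono h2) le_rfl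
      _ = 1 := by rw [add_comm]; exact prob_add_prob_compl (hm 0 1 2)
  have h4 : P A + P B + P C ≤ 2 := by
    calc P A + P B + P C = P (A ∪ B) + (P (A ∩ B) + P C) := by rw [h1]; ring
      _ ≤ 1 + 1 := add_le_add prob_le_one h3
      _ = 2 := by norm_num
  rw [hA, hB] at h4
  rw [ENNReal.le_div_iff_mul_le (by norm_num) (by norm_num)]
  calc P A * 3 = P A + P A + P A := by ring
    _ ≤ 2 := h4

-- powers of 3 comparison
lemma aux3 (a b c : ℕ) : 2 * (3:ℝ)^c < 3^a + 3^b ↔ (c < a ∨ c < b) := by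
  constructor
  · intro h
    by_contra hc
    push_neg at hc
    obtain ⟨ha, hb⟩ := hc
    have h1 : (3:ℝ)^a ≤ 3^c := pow_le_pow_right₀ (by norm_num) ha
    have h2 : (3:ℝ)^b ≤ 3^c := pow_le_pow_right₀ (by norm_num) hb
    linarith
  · intro h
    have hb0 : (0:ℝ) < 3^b := by positivity
    have ha0 : (0:ℝ) < 3^a := by positivity
    rcases h with h | h
    · have : (3:ℝ)^(c+1) ≤ 3^a := pow_le_pow_right₀ (by norm_num) h
      rw [pow_succ] at this
      nlinarith [pow_pos (show (0:ℝ) < 3 by norm_num) c]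
    · have : (3:ℝ)^(c+1) ≤ 3^b := pow_le_pow_right₀ (by norm_num) h
      rw [pow_succ] at this
      nlinarith [pow_pos (show (0:ℝ) < 3 by norm_num) c]

lemma sum_sq (n : ℕ) : 6 * (∑ k ∈ range n, (k+1)^2) = n*(n+1)*(2*n+1) := by
  induction n with
  | zero => simp
  | succ n ih => rw [Finset.sum_range_succ, mul_add, ih]; ring

lemma lower (n : ℕ) (hn : 0 < n) :
    ∃ μ : Measure ℝ, IsProbabilityMeasure μ ∧ μ (Set.Iio 0) = 0 ∧
      (Measure.pi fun _ : Fin 3 => μ) {x | 2 * x 2 < x 0 + x 1}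
        = 1 - (Nat.cast (∑ k ∈ range n, (k+1)^2) : ℝ≥0∞) / (n:ℝ≥0∞)^3 := by
  set ν : Measure (Fin n) := ((n:ℝ≥0∞))⁻¹ • Measure.count with hνdef
  haveI hν : IsProbabilityMeasure ν := by
    constructor
    rw [hνdef, Measure.smul_apply, Measure.count_univ, smul_eq_mul, ENat.card_eq_coe_fintype_card, Fintype.card_fin, ENat.toENNReal_coe]
    exact ENNReal.inv_mul_cancel (by exact_mod_cast hn.ne') (by simp)
  set f : Fin n → ℝ := fun k => 3^(k:ℕ) with hfdef
  have hf : Measurable f := measurable_from_top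
  set μ : Measure ℝ := ν.map f with hμdef
  haveI hμp : IsProbabilityMeasure μ := Measure.isProbabilityMeasure_map hf.aemeasurable
  refine ⟨μ, hμp, ?_, ?_⟩
  · rw [hμdef, Measure.map_apply hf measurableSet_Iio]
    convert measure_empty (μ := ν)
    ext k
    simp only [Set.mem_preimage, Set.mem_Iio, Set.mem_empty_iff_false, iff_false, not_lt, hfdef]
    positivity
  · have hA : MeasurableSet {x : Fin 3 → ℝ | 2 * x 2 < x 0 + x 1} :=
      measurableSet_lt (by fun_prop) (by fun_prop)
    have hg : MeasurePreserving (fun (x : Fin 3 → Fin n) i => f (x i))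
        (Measure.pi fun _ => ν) (Measure.pi fun _ => μ) :=
      measurePreserving_pi (fun _ => ν) (fun _ => μ) (fun i => ⟨hf, rfl⟩)
    rw [← hg.measure_preimage hA.nullMeasurableSet]
    have hpre : (fun (x : Fin 3 → Fin n) i => f (x i)) ⁻¹' {x | 2 * x 2 < x 0 + x 1}
        = {x : Fin 3 → Fin n | x 0 ≤ x 2 ∧ x 1 ≤ x 2}ᶜ := by
      ext x
      simp only [Set.mem_preimage, Set.mem_setOf_eq, Set.mem_compl_iff, hfdef, aux3,
        not_and_or, not_le]
      rw [Fin.lt_def, Fin.lt_def]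
    rw [hpre]
    haveI : IsProbabilityMeasure (Measure.pi fun _ : Fin 3 => ν) :=
      Measure.pi.instIsProbabilityMeasure (μ := fun _ : Fin 3 => ν)
    have hSm : ∀ (s : Set (Fin 3 → Fin n)), MeasurableSet s := by
      intro s
      exact (Set.to_countable s).measurableSet
    rw [prob_compl_eq_one_sub (hSm _)]
    congr 1
    have hS : {x : Fin 3 → Fin n | x 0 ≤ x 2 ∧ x 1 ≤ x 2}
        = ⋃ k : Fin n, Set.pi Set.univ (fun i => if i = 2 then {k} else Set.Iic k) := by
      ext x
      simp only [Set.mem_setOf_eq, Set.mem_iUnion, Set.mem_univ_pi]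
      constructor
      · rintro ⟨h0, h1⟩
        exact ⟨x 2, by intro i; fin_cases i <;> simp [h0, h1]⟩
      · rintro ⟨k, hk⟩
        have h0 := hk 0; have h1 := hk 1; have h2 := hk 2
        simp at h0 h1 h2
        exact ⟨h2 ▸ h0, h2 ▸ h1⟩
    rw [hS, measure_iUnion ?_ (fun k => hSm _)]
    swap
    · intro k k' hkk'
      rw [Function.onFun, Set.disjoint_left]
      intro x hx hx'
      simp only [Set.mem_univ_pi] at hx hx'
      have h2 := hx 2; have h2' := hx' 2
      simp at h2 h2'
      exact hkk' (h2 ▸ h2')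
    have hterm : ∀ k : Fin n,
        (Measure.pi fun _ : Fin 3 => ν) (Set.pi Set.univ (fun i => if i = 2 then {k} else Set.Iic k))
          = ((n:ℝ≥0∞))⁻¹ * ((k:ℕ)+1) * (((n:ℝ≥0∞))⁻¹ * ((k:ℕ)+1)) * (((n:ℝ≥0∞))⁻¹ * 1) := by
      intro k
      rw [Measure.pi_pi, Fin.prod_univ_three]
      have hIic : ν (Set.Iic k) = ((n:ℝ≥0∞))⁻¹ * ((k:ℕ)+1) := by
        rw [hνdef, Measure.smul_apply, smul_eq_mul, ← Finset.coe_Iic,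
          Measure.count_apply_finset, Fin.card_Iic]
        push_cast
        ring
      have hsing : ν ({k} : Set (Fin n)) = ((n:ℝ≥0∞))⁻¹ * 1 := by
        rw [hνdef, Measure.smul_apply, smul_eq_mul, Measure.count_singleton]
      simp only [show ((0:Fin 3) = 2) = False by simp, show ((1:Fin 3) = 2) = False by simp,
        if_false, if_true, reduceIte]
      rw [hIic, hsing]
    simp only [hterm]
    rw [tsum_fintype]
    rw [Fin.sum_univ_eq_sum_range
      (fun j => ((n:ℝ≥0∞))⁻¹ * ((j:ℕ)+1) * (((n:ℝ≥0∞))⁻¹ * ((j:ℕ)+1)) * (((n:ℝ≥0∞))⁻¹ * 1))]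
    push_cast
    simp only [div_eq_mul_inv, ← ENNReal.inv_pow, Finset.sum_mul]
    refine Finset.sum_congr rfl (fun j hj => ?_)
    rw [ENNReal.inv_pow]
    ring

lemma sum_sq' (n : ℕ) : 6 * (∑ k ∈ range n, (k+1)^2) = n*(n+1)*(2*n+1) := by
  induction n with
  | zero => simp
  | succ n ih => rw [Finset.sum_range_succ, mul_add, ih]; ring

lemma key_ineq (n : ℕ) (hn : 0 < n) :
    (2:ℝ≥0∞)/3 ≤ (1 - (Nat.cast (∑ k ∈ range n, (k+1)^2) : ℝ≥0∞) / (n:ℝ≥0∞)^3)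
      + ((n:ℝ≥0∞))⁻¹ := by
  set s : ℕ := ∑ k ∈ range n, (k+1)^2 with hs
  have h6 : 6 * s = n*(n+1)*(2*n+1) := sum_sq' n
  have hn1 : 1 ≤ n := hn
  have hp1 : n ≤ n^3 := Nat.le_self_pow (by norm_num) n
  have hp2 : n^2 ≤ n^3 := Nat.pow_le_pow_right hn1 (by norm_num)
  have hsn : s ≤ n^3 := by nlinarith [h6, hp1, hp2]
  have hn0 : ((n:ℝ≥0∞))^3 ≠ 0 := by
    simp [pow_eq_zero_iff, hn.ne']
  have hnt : ((n:ℝ≥0∞))^3 ≠ ∞ := by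
    simp [ENNReal.pow_eq_top_iff]
  have hdivt : (s:ℝ≥0∞) / (n:ℝ≥0∞)^3 ≠ ∞ :=
    (ENNReal.div_lt_top (by simp) hn0).ne
  have hsle : (s:ℝ≥0∞) / (n:ℝ≥0∞)^3 ≤ 1 := by
    rw [ENNReal.div_le_iff hn0 hnt, one_mul]
    exact_mod_cast Nat.cast_le.mpr hsn
  rw [ENNReal.sub_add_eq_add_sub hsle hdivt]
  refine ENNReal.le_sub_of_add_le_right hdivt ?_
  have hne : ∀ a b : ℝ≥0∞, a ≠ ∞ → b ≠ ∞ → a + b ≠ ∞ := fun a b ha hb => by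
    simp [ENNReal.add_eq_top, ha, hb]
  rw [← ENNReal.toReal_le_toReal
    (hne _ _ (by simp [ENNReal.div_eq_top]) hdivt)
    (hne _ _ (by simp) (by simp [hn.ne']))]
  rw [ENNReal.toReal_add (by simp [ENNReal.div_eq_top]) hdivt,
    ENNReal.toReal_add (by simp) (by simp [hn.ne']),
    ENNReal.toReal_div, ENNReal.toReal_div]
  simp only [ENNReal.toReal_ofNat, ENNReal.toReal_natCast, ENNReal.toReal_one,
    ENNReal.toReal_inv, ENNReal.toReal_pow]
  have hnR : (0:ℝ) < n := by exact_mod_cast hn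
  rw [div_add_div _ _ (by norm_num) (by positivity), div_le_iff₀ (by positivity)]
  have h6R : 6 * (s:ℝ) = n*(n+1)*(2*n+1) := by exact_mod_cast h6
  have h1n : (1:ℝ) ≤ n := by exact_mod_cast hn
  have hexp : (1 + ((n:ℝ))⁻¹) * (3*(n:ℝ)^3) = 3*(n:ℝ)^3 + 3*(n:ℝ)^2 := by
    field_simp
  rw [hexp]
  nlinarith [h6R, h1n, hnR]

/-- The supremum, over all probability measures μ on ℝ supported on the
nonnegative reals, of P_{μ⊗3}(2X₃ < X₁ + X₂) equals 2/3. -/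
theorem stmt9 :
    (⨆ μ : {μ : Measure ℝ // IsProbabilityMeasure μ ∧ μ (Set.Iio 0) = 0},
      (Measure.pi fun _ : Fin 3 => (μ : Measure ℝ))
        {x | 2 * x 2 < x 0 + x 1}) = 2 / 3 := by
  apply le_antisymm
  · refine iSup_le fun m => ?_
    haveI := m.2.1
    exact upper m.1
  · refine ENNReal.le_of_forall_pos_le_add fun ε hε hlt => ?_
    obtain ⟨n, hn⟩ := exists_nat_gt (ε⁻¹ : ℝ≥0)
    have hn0 : 0 < n := by
      rcases Nat.eq_zero_or_pos n with h | h
      · exfalso; rw [h] at hn; exact absurd hn (by simp)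
      · exact h
    obtain ⟨μ, hp, h0, hval⟩ := lower n hn0
    have hinv : ((n:ℝ≥0∞))⁻¹ ≤ (ε:ℝ≥0∞) := by
      rw [← inv_inv (ε:ℝ≥0∞)]
      refine ENNReal.inv_le_inv.mpr ?_
      rw [← ENNReal.coe_inv hε.ne']
      exact_mod_cast hn.le
    haveI := hp
    calc (2:ℝ≥0∞)/3
        ≤ (1 - (Nat.cast (∑ k ∈ range n, (k+1)^2) : ℝ≥0∞) / (n:ℝ≥0∞)^3)
            + ((n:ℝ≥0∞))⁻¹ := key_ineq n hn0
      _ = (Measure.pi fun _ : Fin 3 => μ) {x | 2 * x 2 < x 0 + x 1} + ((n:ℝ≥0∞))⁻¹ := by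
            rw [hval]
      _ ≤ (⨆ μ : {μ : Measure ℝ // IsProbabilityMeasure μ ∧ μ (Set.Iio 0) = 0},
            (Measure.pi fun _ : Fin 3 => (μ : Measure ℝ))
              {x | 2 * x 2 < x 0 + x 1}) + (ε:ℝ≥0∞) := by
            refine add_le_add ?_ hinv
            exact le_iSup (fun m : {μ : Measure ℝ // IsProbabilityMeasure μ ∧ μ (Set.Iio 0) = 0} =>
              (Measure.pi fun _ : Fin 3 => (m : Measure ℝ)) {x | 2 * x 2 < x 0 + x 1})
              ⟨μ, hp, h0⟩
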